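/- Let g : [0,1] → [0,∞] be a g-generator and let I_g be the g-generated implication I_g(x,y) = g^(-1)((1/x) · g(y)). If I_g satisfies the functional equation (IE), i.e. I_g(I_g(y,x), I_g(x,y)) = I_g(x,y) for all x, y ∈ [0,1], then g(1) < ∞. -/

import Mathlib

open Set
open scoped ENNReal

/-- If the g-generated implication `I_g x y = g^(-1) ((1/x) * g y)`
(with the conventions `1/0 = ∞` and `∞ * 0 = ∞`, so that `I_g 0 y = 1`) satisfies (IE),
then `g 1 < ∞`. Here `ginv` is the pseudo-inverse of the g-generator `g`. -/
theorem stmt_10 (g : ℝ → ℝ≥0∞)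
    (hcont : ContinuousOn g (Icc (0:ℝ) 1))
    (hmono : StrictMonoOn g (Icc (0:ℝ) 1))
    (hg0 : g 0 = 0)
    (ginv : ℝ≥0∞ → ℝ)
    (hginv : ∀ x ∈ Icc (0:ℝ) 1, ginv (g x) = x)
    (hginv' : ∀ t : ℝ≥0∞, g 1 ≤ t → ginv t = 1)
    (I : ℝ → ℝ → ℝ)
    (hI : ∀ x y, I x y = if x = 0 then 1 else ginv ((ENNReal.ofReal x)⁻¹ * g y))
    (hIE : ∀ x ∈ Icc (0:ℝ) 1, ∀ y ∈ Icc (0:ℝ) 1, I (I y x) (I x y) = I x y) :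
    g 1 < ∞ := by
  by_contra h
  have htop : g 1 = ⊤ := top_le_iff.mp (not_lt.mp h)
  have hsurj : ∀ t : ℝ≥0∞, ∃ s ∈ Icc (0:ℝ) 1, g s = t := by
    intro t
    have ht : t ∈ Icc (g 0) (g 1) := by
      constructor
      · simp [hg0]
      · simp [htop]
    obtain ⟨s, hs, hgs⟩ := intermediate_value_Icc (by norm_num : (0:ℝ) ≤ 1) hcont ht
    exact ⟨s, hs, hgs⟩
  have hginvmem : ∀ t : ℝ≥0∞, ginv t ∈ Icc (0:ℝ) 1 ∧ g (ginv t) = t := by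
    intro t
    obtain ⟨s, hs, hgs⟩ := hsurj t
    have hst : ginv t = s := by rw [← hgs, hginv s hs]
    rw [hst, hgs]
    exact ⟨hs, rfl⟩
  set x : ℝ := 1/2 with hxdef
  have hxmem : x ∈ Icc (0:ℝ) 1 := by constructor <;> norm_num
  have hc0 : g x ≠ 0 := by
    have := hmono (left_mem_Icc.mpr zero_le_one) hxmem (by norm_num)
    rw [hg0] at this
    exact this.ne'
  have hctop : g x ≠ ⊤ := by
    have := hmono hxmem (right_mem_Icc.mpr zero_le_one) (by norm_num)
    rw [htop] at this
    exact this.ne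
  have hxr0 : ENNReal.ofReal x ≠ 0 := by
    simp [hxdef]
  set t : ℝ≥0∞ := (ENNReal.ofReal x)⁻¹ * g x with htdef
  have ht0 : t ≠ 0 := by
    simp [htdef, ENNReal.inv_ne_zero, hc0, ENNReal.ofReal_ne_top]
  have httop : t ≠ ⊤ := by
    refine ENNReal.mul_ne_top ?_ hctop
    simp [ENNReal.inv_ne_top, hxr0]
  have hIxx : I x x = ginv t := by
    rw [hI]
    simp [hxdef, htdef]
  set a := ginv t with hadef
  obtain ⟨hamem, hga⟩ := hginvmem t
  have ha0 : a ≠ 0 := by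
    intro h0
    rw [hadef] at h0
    rw [h0, hg0] at hga
    exact ht0 hga.symm
  have hIE' := hIE x hxmem x hxmem
  rw [hIxx] at hIE'
  rw [hI, if_neg ha0, hga] at hIE'
  have key : (ENNReal.ofReal a)⁻¹ * t = t := by
    have h1 := (hginvmem ((ENNReal.ofReal a)⁻¹ * t)).2
    rw [hIE'] at h1
    rw [hga] at h1
    exact h1.symm
  have hinv1 : (ENNReal.ofReal a)⁻¹ = 1 := by
    exact (ENNReal.mul_left_inj ht0 httop).mp (key.trans (one_mul t).symm)
  have ha1 : a = 1 := by
    rw [ENNReal.inv_eq_one] at hinv1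
    exact ENNReal.ofReal_eq_one.mp hinv1
  rw [show ginv t = (1:ℝ) from ha1, htop] at hga
  exact httop hga.symm
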